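/- Let r > 0, let f : [0,r] → ℝ be a continuous non-negative function and let P be a real polynomial with non-negative coefficients. Suppose f satisfies f(τ) ≤ f(0) + ∫₀^τ f(σ)·P(f(σ)^{1/2}) dσ for all τ ∈ [0,r]. Then there exist ε > 0 and C > 1, depending only on P and r, such that whenever f(0) ≤ ε one has f(τ) ≤ C·f(0) for all τ ∈ [0,r]. -/

import Mathlib

open Real Set intervalIntegral

private lemma poly_eval_nonneg (P : Polynomial ℝ) (hP : ∀ k, 0 ≤ P.coeff k)
    {x : ℝ} (hx : 0 ≤ x) : 0 ≤ P.eval x := by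
  rw [Polynomial.eval_eq_sum_range]
  exact Finset.sum_nonneg fun k _ => mul_nonneg (hP k) (pow_nonneg hx k)

private lemma poly_eval_mono (P : Polynomial ℝ) (hP : ∀ k, 0 ≤ P.coeff k)
    {x y : ℝ} (hx : 0 ≤ x) (hxy : x ≤ y) : P.eval x ≤ P.eval y := by
  rw [Polynomial.eval_eq_sum_range, Polynomial.eval_eq_sum_range]
  exact Finset.sum_le_sum fun k _ =>
    mul_le_mul_of_nonneg_left (pow_le_pow_left₀ hx hxy k) (hP k)

private lemma exp_mul_integral {L t : ℝ} (hL : 0 < L) :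
    ∫ σ in (0:ℝ)..t, Real.exp (L * σ) = (Real.exp (L * t) - 1) / L := by
  have := intervalIntegral.integral_comp_mul_left (fun x => Real.exp x)
    (a := 0) (b := t) (ne_of_gt hL)
  simp only [mul_zero] at this
  rw [this, integral_exp]
  rw [Real.exp_zero]
  field_simp
  rw [smul_eq_mul, ← mul_assoc, mul_one_div_cancel (ne_of_gt hL), one_mul]

/-- Key step: exponential bound up to the first crossing. -/
private lemma key_lemma (P : Polynomial ℝ) (hP : ∀ k, 0 ≤ P.coeff k)
    (r : ℝ) (hr : 0 < r) (a : ℝ) (ha : 0 < a)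
    (hCa : 2 * a * Real.exp ((P.eval 1 + 1) * r) ≤ 1)
    (f : ℝ → ℝ) (hf : ContinuousOn f (Set.Icc 0 r))
    (hf0 : ∀ τ ∈ Set.Icc (0:ℝ) r, 0 ≤ f τ)
    (hineq : ∀ τ ∈ Set.Icc (0:ℝ) r,
      f τ ≤ f 0 + ∫ σ in (0:ℝ)..τ, f σ * P.eval (Real.sqrt (f σ)))
    (hfa : f 0 ≤ a) :
    ∀ τ ∈ Set.Icc (0:ℝ) r, f τ ≤ 2 * a * Real.exp ((P.eval 1 + 1) * τ) := by
  set K : ℝ := P.eval 1 with hKdef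
  have hK : 0 ≤ K := poly_eval_nonneg P hP zero_le_one
  set L : ℝ := K + 1 with hLdef
  have hL : 0 < L := by positivity
  set g : ℝ → ℝ := fun s => 2 * a * Real.exp (L * s) with hgdef
  by_contra hcon
  push_neg at hcon
  obtain ⟨τ₀, hτ₀, hgt⟩ := hcon
  set S : Set ℝ := {t ∈ Set.Icc (0:ℝ) r | g t ≤ f t} with hSdef
  have hgcont : Continuous g := by fun_prop
  have hSclosed : IsClosed S := by
    have : S = Set.Icc (0:ℝ) r ∩ (fun t => f t - g t) ⁻¹' (Set.Ici 0) := by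
      ext t; simp [hSdef, sub_nonneg, and_comm]
    rw [this]
    exact ContinuousOn.preimage_isClosed_of_isClosed
      (hf.sub hgcont.continuousOn) isClosed_Icc isClosed_Ici
  have hSne : S.Nonempty := ⟨τ₀, hτ₀, le_of_lt hgt⟩
  have hSbdd : BddBelow S := ⟨0, fun s hs => hs.1.1⟩
  set t : ℝ := sInf S with htdef
  have htS : t ∈ S := hSclosed.csInf_mem hSne hSbdd
  have htIcc : t ∈ Set.Icc (0:ℝ) r := htS.1
  have htmin : ∀ s ∈ S, t ≤ s := fun s hs => csInf_le hSbdd hs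
  have htpos : 0 < t := by
    rcases lt_or_eq_of_le htIcc.1 with h | h
    · exact h
    · exfalso
      have := htS.2
      rw [← h] at this
      simp only [hgdef, mul_zero, Real.exp_zero, mul_one] at this
      have hf00 : f 0 ≤ a := hfa
      linarith
  have hlt : ∀ s ∈ Set.Ico (0:ℝ) t, f s < g s := by
    intro s hs
    by_contra hge
    push_neg at hge
    have : s ∈ S := ⟨⟨hs.1, le_trans hs.2.le htIcc.2⟩, hge⟩
    exact absurd (htmin s this) (not_le.mpr hs.2)
  -- f t ≤ g t by continuity
  have hft_le : f t ≤ g t := by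
    have hcw : ContinuousWithinAt (fun s => f s - g s) (Set.Ico 0 t) t := by
      have : ContinuousWithinAt (fun s => f s - g s) (Set.Icc 0 r) t :=
        (hf.sub hgcont.continuousOn) t htIcc
      exact this.mono (fun s hs => ⟨hs.1, le_trans hs.2.le htIcc.2⟩)
    have hne : (nhdsWithin t (Set.Ico 0 t)).NeBot := by
      rw [← mem_closure_iff_nhdsWithin_neBot, closure_Ico (ne_of_lt htpos)]
      exact ⟨htpos.le, le_refl t⟩
    have h := le_of_tendsto hcw
      (Filter.eventually_of_mem self_mem_nhdsWithin
        (fun s hs => (sub_nonpos.mpr (hlt s hs).le)))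
    simp only [sub_nonpos] at h
    exact h
  have hfs : ∀ s ∈ Set.Icc (0:ℝ) t, f s ≤ g s := by
    intro s hs
    rcases lt_or_eq_of_le hs.2 with h | h
    · exact (hlt s ⟨hs.1, h⟩).le
    · rw [h]; exact hft_le
  have hsub : Set.Icc (0:ℝ) t ⊆ Set.Icc 0 r :=
    Set.Icc_subset_Icc le_rfl htIcc.2
  have hsmall : ∀ s ∈ Set.Icc (0:ℝ) t, f s ≤ 1 := by
    intro s hs
    have h1 : g s ≤ 2 * a * Real.exp (L * r) := by
      have : L * s ≤ L * r := by
        exact mul_le_mul_of_nonneg_left (le_trans hs.2 htIcc.2) hL.le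
      exact mul_le_mul_of_nonneg_left (Real.exp_le_exp.mpr this) (by positivity)
    calc f s ≤ g s := hfs s hs
    _ ≤ 2 * a * Real.exp (L * r) := h1
    _ ≤ 1 := hCa
  -- pointwise bound on the integrand
  have hbound : ∀ s ∈ Set.Icc (0:ℝ) t,
      f s * P.eval (Real.sqrt (f s)) ≤ K * g s := by
    intro s hs
    have hfs0 : 0 ≤ f s := hf0 s (hsub hs)
    have hsq : Real.sqrt (f s) ≤ 1 := by
      rw [show (1:ℝ) = Real.sqrt 1 by simp]
      exact Real.sqrt_le_sqrt (hsmall s hs)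
    have hPle : P.eval (Real.sqrt (f s)) ≤ K :=
      poly_eval_mono P hP (Real.sqrt_nonneg _) hsq
    have hPnn : 0 ≤ P.eval (Real.sqrt (f s)) :=
      poly_eval_nonneg P hP (Real.sqrt_nonneg _)
    calc f s * P.eval (Real.sqrt (f s)) ≤ f s * K :=
          mul_le_mul_of_nonneg_left hPle hfs0
    _ ≤ g s * K := mul_le_mul_of_nonneg_right (hfs s hs) hK
    _ = K * g s := mul_comm _ _
  -- integrability
  have hcont_int : ContinuousOn (fun σ => f σ * P.eval (Real.sqrt (f σ)))
      (Set.Icc 0 r) := by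
    apply hf.mul
    exact (Polynomial.continuous P).comp_continuousOn
      (Real.continuous_sqrt.comp_continuousOn hf)
  have hint1 : IntervalIntegrable (fun σ => f σ * P.eval (Real.sqrt (f σ)))
      MeasureTheory.volume 0 t := by
    apply ContinuousOn.intervalIntegrable
    apply hcont_int.mono
    rw [Set.uIcc_of_le htpos.le]
    exact hsub
  have hint2 : IntervalIntegrable (fun σ => K * g σ) MeasureTheory.volume 0 t :=
    (Continuous.intervalIntegrable (by fun_prop) 0 t)
  have hInt_le : (∫ σ in (0:ℝ)..t, f σ * P.eval (Real.sqrt (f σ)))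
      ≤ ∫ σ in (0:ℝ)..t, K * g σ := by
    apply intervalIntegral.integral_mono_on htpos.le hint1 hint2 hbound
  have hInt_val : (∫ σ in (0:ℝ)..t, K * g σ)
      = K * (2 * a) * ((Real.exp (L * t) - 1) / L) := by
    have : (fun σ => K * g σ) = fun σ => (K * (2 * a)) * Real.exp (L * σ) := by
      funext σ; simp [hgdef]; ring
    rw [this, intervalIntegral.integral_const_mul, exp_mul_integral hL]
  have hexp1 : (1:ℝ) ≤ Real.exp (L * t) := by
    rw [show (1:ℝ) = Real.exp 0 by simp]
    exact Real.exp_le_exp.mpr (by positivity)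
  have hKL : K * (2 * a) * ((Real.exp (L * t) - 1) / L)
      ≤ 2 * a * (Real.exp (L * t) - 1) := by
    rw [div_eq_mul_inv]
    have h1 : K * (2 * a) * ((Real.exp (L * t) - 1) * L⁻¹)
        = (2 * a * (Real.exp (L * t) - 1)) * (K / L) := by ring
    rw [h1]
    have h2 : K / L ≤ 1 := by
      rw [div_le_one hL]; simp [hLdef]
    have h3 : (0:ℝ) ≤ 2 * a * (Real.exp (L * t) - 1) := by nlinarith
    have h4 := mul_le_mul_of_nonneg_left h2 h3
    linarith
  have hchain : f t ≤ a + 2 * a * (Real.exp (L * t) - 1) := by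
    calc f t ≤ f 0 + ∫ σ in (0:ℝ)..t, f σ * P.eval (Real.sqrt (f σ)) :=
          hineq t htIcc
    _ ≤ a + ∫ σ in (0:ℝ)..t, K * g σ := add_le_add hfa hInt_le
    _ = a + K * (2 * a) * ((Real.exp (L * t) - 1) / L) := by rw [hInt_val]
    _ ≤ a + 2 * a * (Real.exp (L * t) - 1) := by linarith
  have hgt' : g t ≤ f t := htS.2
  simp only [hgdef] at hgt'
  linarith

theorem nonlinear_gronwall_compact_interval (P : Polynomial ℝ)
    (hP : ∀ k, 0 ≤ P.coeff k) (r : ℝ) (hr : 0 < r) :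
    ∃ ε > (0 : ℝ), ∃ C > (1 : ℝ), ∀ f : ℝ → ℝ,
      ContinuousOn f (Set.Icc 0 r) →
      (∀ τ ∈ Set.Icc (0:ℝ) r, 0 ≤ f τ) →
      (∀ τ ∈ Set.Icc (0:ℝ) r,
        f τ ≤ f 0 + ∫ σ in (0:ℝ)..τ, f σ * P.eval (Real.sqrt (f σ))) →
      f 0 ≤ ε →
      ∀ τ ∈ Set.Icc (0:ℝ) r, f τ ≤ C * f 0 := by
  set K : ℝ := P.eval 1 with hKdef
  have hK : 0 ≤ K := poly_eval_nonneg P hP zero_le_one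
  set L : ℝ := K + 1 with hLdef
  have hL : 0 < L := by positivity
  set C : ℝ := 2 * Real.exp (L * r) with hCdef
  clear_value C
  have hC1 : 1 < C := by
    have : (1:ℝ) ≤ Real.exp (L * r) := by
      rw [show (1:ℝ) = Real.exp 0 by simp]
      exact Real.exp_le_exp.mpr (by positivity)
    simp only [hCdef]; linarith
  have hCpos : 0 < C := by linarith
  have hCne : C ≠ 0 := ne_of_gt hCpos
  refine ⟨1 / (2 * C), div_pos one_pos (by linarith), C, hC1,
    fun f hf hf0 hineq hfε τ hτ => ?_⟩
  -- f τ ≤ C * f 0 via limit over a = f 0 + η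
  have key : ∀ η : ℝ, 0 < η → η ≤ 1 / (2 * C) → f τ ≤ C * (f 0 + η) := by
    intro η hη hη2
    have ha : 0 < f 0 + η := lt_of_lt_of_le hη (by
      have := hf0 0 ⟨le_rfl, hr.le⟩; linarith)
    have hCa : 2 * (f 0 + η) * Real.exp ((P.eval 1 + 1) * r) ≤ 1 := by
      have h1 : f 0 + η ≤ 1 / C := by
        have h2 : 1 / (2 * C) + 1 / (2 * C) = 1 / C := by
          field_simp
          norm_num
        linarith
      calc 2 * (f 0 + η) * Real.exp ((P.eval 1 + 1) * r)
          = (f 0 + η) * C := by rw [hCdef, hLdef, hKdef]; ring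
      _ ≤ (1 / C) * C := mul_le_mul_of_nonneg_right h1 hCpos.le
      _ = 1 := one_div_mul_cancel hCne
    have := key_lemma P hP r hr (f 0 + η) ha hCa f hf hf0 hineq (by linarith)
      τ hτ
    calc f τ ≤ 2 * (f 0 + η) * Real.exp ((P.eval 1 + 1) * τ) := this
    _ ≤ 2 * (f 0 + η) * Real.exp ((P.eval 1 + 1) * r) := by
        apply mul_le_mul_of_nonneg_left _ (by linarith)
        apply Real.exp_le_exp.mpr
        exact mul_le_mul_of_nonneg_left hτ.2 (by rw [← hKdef, ← hLdef]; linarith)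
    _ = C * (f 0 + η) := by rw [hCdef, hLdef, hKdef]; ring
  -- take the limit η → 0
  have : ∀ δ : ℝ, 0 < δ → f τ ≤ C * f 0 + δ := by
    intro δ hδ
    have hη : 0 < min (δ / C) (1 / (2 * C)) :=
      lt_min (div_pos hδ hCpos) (div_pos one_pos (by linarith))
    have := key _ hη (min_le_right _ _)
    have h2 : C * min (δ / C) (1 / (2 * C)) ≤ δ := by
      calc C * min (δ / C) (1 / (2 * C)) ≤ C * (δ / C) :=
            mul_le_mul_of_nonneg_left (min_le_left _ _) hCpos.le
      _ = δ := by rw [mul_comm, div_mul_cancel₀ _ hCne]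
    calc f τ ≤ C * (f 0 + min (δ / C) (1 / (2 * C))) := this
    _ = C * f 0 + C * min (δ / C) (1 / (2 * C)) := by ring
    _ ≤ C * f 0 + δ := by linarith
  exact le_of_forall_pos_le_add this
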